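/- Let (Ω, ℱ, ℙ) be a probability space and H: ℝⁿ × Ω → ℝⁿ with H(x, ·) integrable for each x. Suppose there is a set Ω̄ ⊆ Ω with ℙ(Ω̄) = 1 and a constant η̄ > 0 such that for every ω ∈ Ω̄, the map H(·, ω) is co-coercive on ℝⁿ with constant η(ω) ≥ η̄, i.e., (x - y)ᵀ(H(x,ω) - H(y,ω)) ≥ η(ω) ‖H(x,ω) - H(y,ω)‖² for all x, y. Then the expected-value map x ↦ 𝔼[H(x, ω)] is co-coercive on ℝⁿ with constant η̄. -/

import Mathlib

open MeasureTheory

theorem ae_nonneg_of_nonneg_on {Ω : Type*} [MeasurableSpace Ω] (ℙ : Measure Ω)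
    [IsProbabilityMeasure ℙ] (g : Ω → ℝ) (hg : AEStronglyMeasurable g ℙ)
    (s : Set Ω) (hs : ℙ s = 1) (h : ∀ ω ∈ s, 0 ≤ g ω) : 0 ≤ᵐ[ℙ] g := by
  obtain ⟨g', hg'm, hgg'⟩ := hg
  have hset : MeasurableSet {ω | 0 ≤ g' ω} :=
    hg'm.measurable measurableSet_Ici
  have hne : ℙ {ω | ¬ g ω = g' ω} = 0 := by
    exact hgg'
  have hsub : s ⊆ {ω | 0 ≤ g' ω} ∪ {ω | ¬ g ω = g' ω} := by
    intro ω hω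
    by_cases heq : g ω = g' ω
    · exact Or.inl (show 0 ≤ g' ω from heq ▸ h ω hω)
    · exact Or.inr heq
  have h1 : (1 : ENNReal) ≤ ℙ {ω | 0 ≤ g' ω} := by
    calc (1 : ENNReal) = ℙ s := hs.symm
      _ ≤ ℙ ({ω | 0 ≤ g' ω} ∪ {ω | ¬ g ω = g' ω}) := measure_mono hsub
      _ ≤ ℙ {ω | 0 ≤ g' ω} + ℙ {ω | ¬ g ω = g' ω} := measure_union_le _ _
      _ = ℙ {ω | 0 ≤ g' ω} := by rw [hne, add_zero]
  have h2 : ℙ {ω | 0 ≤ g' ω} = 1 := le_antisymm prob_le_one h1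
  have h3 : ℙ {ω | 0 ≤ g' ω}ᶜ = 0 := (prob_compl_eq_zero_iff hset).2 h2
  have h4 : ∀ᵐ ω ∂ℙ, 0 ≤ g' ω := by
    rw [ae_iff]
    exact h3
  filter_upwards [h4, hgg'] with ω h5 h6
  rw [Pi.zero_apply, h6]
  exact h5

theorem sq_integral_le {Ω : Type*} [MeasurableSpace Ω] (ℙ : Measure Ω)
    [IsProbabilityMeasure ℙ] (f : Ω → ℝ) (hf : Integrable f ℙ)
    (hf2 : Integrable (fun ω => f ω ^ 2) ℙ) :
    (∫ ω, f ω ∂ℙ) ^ 2 ≤ ∫ ω, f ω ^ 2 ∂ℙ := by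
  set m := ∫ ω, f ω ∂ℙ with hm
  have heq : (fun ω => (f ω - m) ^ 2) = fun ω => f ω ^ 2 - 2 * m * f ω + m ^ 2 := by
    funext ω; ring
  have h0 : 0 ≤ ∫ ω, (f ω - m) ^ 2 ∂ℙ := integral_nonneg fun ω => sq_nonneg _
  have hexp : ∫ ω, (f ω - m) ^ 2 ∂ℙ = (∫ ω, f ω ^ 2 ∂ℙ) - m ^ 2 := by
    have ha : Integrable (fun ω => f ω ^ 2 - 2 * m * f ω) ℙ := hf2.sub (hf.const_mul (2 * m))
    rw [heq, integral_add ha (integrable_const _),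
      integral_sub hf2 (hf.const_mul (2 * m)), integral_const_mul, integral_const]
    simp [← hm]
    ring
  linarith [hexp ▸ h0]

theorem expectation_cocoercive
    {Ω : Type*} [MeasurableSpace Ω] (ℙ : Measure Ω) [IsProbabilityMeasure ℙ]
    {n : ℕ} (H : (Fin n → ℝ) → Ω → (Fin n → ℝ))
    (hint : ∀ x i, Integrable (fun ω => H x ω i) ℙ)
    (Ωbar : Set Ω) (hΩbar : ℙ Ωbar = 1)
    (η : Ω → ℝ) (ηbar : ℝ) (hηbar : 0 < ηbar)
    (hη : ∀ ω ∈ Ωbar, ηbar ≤ η ω)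
    (hcc : ∀ ω ∈ Ωbar, ∀ x y : Fin n → ℝ,
      η ω * ∑ i, (H x ω i - H y ω i) ^ 2 ≤ ∑ i, (x i - y i) * (H x ω i - H y ω i)) :
    ∀ x y : Fin n → ℝ,
      ηbar * ∑ i, ((∫ ω, H x ω i ∂ℙ) - ∫ ω, H y ω i ∂ℙ) ^ 2 ≤
        ∑ i, (x i - y i) * ((∫ ω, H x ω i ∂ℙ) - ∫ ω, H y ω i ∂ℙ) := by
  intro x y
  set G : Fin n → Ω → ℝ := fun i ω => H x ω i - H y ω i with hGdef
  have hGint : ∀ i, Integrable (G i) ℙ := fun i => (hint x i).sub (hint y i)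
  have hRint : Integrable (fun ω => ∑ i, (x i - y i) * G i ω) ℙ :=
    integrable_finset_sum _ fun i _ => (hGint i).const_mul _
  have hsqAESM : AEStronglyMeasurable (fun ω => ∑ i, (G i ω) ^ 2) ℙ :=
    Finset.aestronglyMeasurable_fun_sum _ fun i _ => (hGint i).aestronglyMeasurable.pow 2
  have hsq_nonneg : ∀ ω, (0:ℝ) ≤ ∑ i, (G i ω) ^ 2 :=
    fun ω => Finset.sum_nonneg fun i _ => sq_nonneg _
  -- the a.e. co-coercivity with constant ηbar
  have hae : 0 ≤ᵐ[ℙ] fun ω =>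
      (∑ i, (x i - y i) * G i ω) - ηbar * ∑ i, (G i ω) ^ 2 := by
    apply ae_nonneg_of_nonneg_on ℙ _ (hRint.aestronglyMeasurable.sub
      (hsqAESM.const_mul ηbar)) Ωbar hΩbar
    intro ω hω
    have h1 : ηbar * ∑ i, (H x ω i - H y ω i) ^ 2 ≤ η ω * ∑ i, (H x ω i - H y ω i) ^ 2 :=
      mul_le_mul_of_nonneg_right (hη ω hω) (Finset.sum_nonneg fun i _ => sq_nonneg _)
    have h2 := hcc ω hω x y
    simp only [Pi.sub_apply, sub_nonneg, hGdef]
    exact h1.trans h2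
  -- integrability of the square sum
  have hsqint : Integrable (fun ω => ∑ i, (G i ω) ^ 2) ℙ := by
    refine Integrable.mono' (hRint.const_mul (1 / ηbar)) hsqAESM ?_
    filter_upwards [hae] with ω hω
    rw [Real.norm_eq_abs, abs_of_nonneg (hsq_nonneg ω)]
    rw [Pi.zero_apply, sub_nonneg] at hω
    rw [div_mul_eq_mul_div, le_div_iff₀ hηbar, one_mul]
    linarith [hω]
  have hsqi : ∀ i, Integrable (fun ω => (G i ω) ^ 2) ℙ := by
    intro i
    refine Integrable.mono' hsqint ((hGint i).aestronglyMeasurable.pow 2) ?_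
    refine Filter.Eventually.of_forall fun ω => ?_
    rw [Real.norm_eq_abs, abs_of_nonneg (sq_nonneg _)]
    exact Finset.single_le_sum (fun j _ => sq_nonneg (G j ω)) (Finset.mem_univ i)
  -- Jensen on each coordinate
  have jensen : ∀ i, (∫ ω, G i ω ∂ℙ) ^ 2 ≤ ∫ ω, (G i ω) ^ 2 ∂ℙ :=
    fun i => sq_integral_le ℙ _ (hGint i) (hsqi i)
  -- rewrite the difference of integrals as the integral of G i
  have hGi : ∀ i, (∫ ω, H x ω i ∂ℙ) - ∫ ω, H y ω i ∂ℙ = ∫ ω, G i ω ∂ℙ :=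
    fun i => (integral_sub (hint x i) (hint y i)).symm
  -- main chain
  have step1 : ∑ i, ((∫ ω, H x ω i ∂ℙ) - ∫ ω, H y ω i ∂ℙ) ^ 2 ≤
      ∫ ω, ∑ i, (G i ω) ^ 2 ∂ℙ := by
    rw [integral_finset_sum _ fun i _ => hsqi i]
    refine Finset.sum_le_sum fun i _ => ?_
    rw [hGi i]; exact jensen i
  have step2 : ∫ ω, ηbar * ∑ i, (G i ω) ^ 2 ∂ℙ ≤
      ∫ ω, ∑ i, (x i - y i) * G i ω ∂ℙ := by
    refine integral_mono_ae (hsqint.const_mul ηbar) hRint ?_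
    filter_upwards [hae] with ω hω
    rw [Pi.zero_apply, sub_nonneg] at hω
    exact hω
  rw [integral_const_mul] at step2
  have step3 : ∫ ω, ∑ i, (x i - y i) * G i ω ∂ℙ =
      ∑ i, (x i - y i) * ((∫ ω, H x ω i ∂ℙ) - ∫ ω, H y ω i ∂ℙ) := by
    rw [integral_finset_sum _ fun i _ => (hGint i).const_mul _]
    refine Finset.sum_congr rfl fun i _ => ?_
    rw [integral_const_mul, hGi i]
  calc ηbar * ∑ i, ((∫ ω, H x ω i ∂ℙ) - ∫ ω, H y ω i ∂ℙ) ^ 2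
      ≤ ηbar * ∫ ω, ∑ i, (G i ω) ^ 2 ∂ℙ :=
        mul_le_mul_of_nonneg_left step1 hηbar.le
    _ ≤ ∫ ω, ∑ i, (x i - y i) * G i ω ∂ℙ := step2
    _ = _ := step3
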